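/- Fix real parameters a, b, c and natural numbers l and ν. For every real x with 0 < x < 1, the complementary polynomial of the hypergeometric equation has the explicit form 𝒫_ν(x,l) = ν! · Σ_{λ=0}^{ν} C(l+a+b−c, λ)·C(l+c−1, ν−λ)·(1−x)^{ν−λ}·(−x)^λ, where C(r,k) = (∏_{i=0}^{k−1}(r−i))/k! is the generalized binomial coefficient. -/

import Mathlib

open Finset

/-- `k`-th derivative shape of `(1-t)^q`. -/
noncomputable def chA (q : ℝ) (k : ℕ) (x : ℝ) : ℝ :=
  (∏ i ∈ Finset.range k, (q - (i : ℝ))) * (-1 : ℝ) ^ k * (1 - x) ^ (q - (k : ℝ))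

/-- `k`-th derivative shape of `t^p`. -/
noncomputable def chB (p : ℝ) (k : ℕ) (x : ℝ) : ℝ :=
  (∏ i ∈ Finset.range k, (p - (i : ℝ))) * x ^ (p - (k : ℝ))

lemma hasDerivAt_chB (p : ℝ) (k : ℕ) {x : ℝ} (hx : 0 < x) :
    HasDerivAt (chB p k) (chB p (k + 1) x) x := by
  have h := (Real.hasDerivAt_rpow_const (p := p - (k : ℝ)) (Or.inl hx.ne')).const_mul
    (∏ i ∈ Finset.range k, (p - (i : ℝ)))
  refine (show HasDerivAt (chB p k) _ x from h).congr_deriv ?_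
  simp only [chB, Finset.prod_range_succ]
  push_cast
  rw [show p - ((k : ℝ) + 1) = p - (k : ℝ) - 1 by ring]
  ring

lemma hasDerivAt_chA (q : ℝ) (k : ℕ) {x : ℝ} (hx : x < 1) :
    HasDerivAt (chA q k) (chA q (k + 1) x) x := by
  have h1 : HasDerivAt (fun t : ℝ => 1 - t) (-1) x := by
    simpa using (hasDerivAt_id x).const_sub 1
  have h2 : HasDerivAt (fun t : ℝ => (1 - t) ^ (q - (k : ℝ)))
      ((-1) * (q - (k : ℝ)) * (1 - x) ^ (q - (k : ℝ) - 1)) x :=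
    h1.rpow_const (Or.inl (by linarith))
  have h := h2.const_mul ((∏ i ∈ Finset.range k, (q - (i : ℝ))) * (-1 : ℝ) ^ k)
  refine (show HasDerivAt (chA q k) _ x from h).congr_deriv ?_
  simp only [chA, Finset.prod_range_succ, pow_succ]
  push_cast
  rw [show q - ((k : ℝ) + 1) = q - (k : ℝ) - 1 by ring]
  ring

lemma pascal_sum (f g : ℕ → ℝ) (n : ℕ) :
    ∑ lam ∈ range (n + 1),
        (n.choose lam : ℝ) * (f (lam + 1) * g (n - lam) + f lam * g (n - lam + 1))
      = ∑ lam ∈ range (n + 2), ((n + 1).choose lam : ℝ) * (f lam * g (n + 1 - lam)) := by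
  have hr : ∑ lam ∈ range (n + 2), ((n + 1).choose lam : ℝ) * (f lam * g (n + 1 - lam))
      = (∑ i ∈ range (n + 1), ((n + 1).choose (i + 1) : ℝ) * (f (i + 1) * g (n - i)))
        + f 0 * g (n + 1) := by
    rw [Finset.sum_range_succ']
    simp
  simp only [mul_add, Finset.sum_add_distrib]
  rw [hr]
  have h2 : ∑ lam ∈ range (n + 1), (n.choose lam : ℝ) * (f lam * g (n - lam + 1))
      = (∑ i ∈ range n, (n.choose (i + 1) : ℝ) * (f (i + 1) * g (n - i)))
        + f 0 * g (n + 1) := by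
    rw [Finset.sum_range_succ']
    congr 1
    · apply Finset.sum_congr rfl
      intro i hi
      simp only [Finset.mem_range] at hi
      rw [show n - (i + 1) + 1 = n - i by omega]
    · simp
  rw [h2]
  have h3 : ∑ i ∈ range n, (n.choose (i + 1) : ℝ) * (f (i + 1) * g (n - i))
      = ∑ i ∈ range (n + 1), (n.choose (i + 1) : ℝ) * (f (i + 1) * g (n - i)) := by
    rw [Finset.sum_range_succ, Nat.choose_succ_self]
    simp
  rw [h3]
  have h4 : ∀ i ∈ range (n + 1), (((n + 1).choose (i + 1) : ℝ)) * (f (i + 1) * g (n - i))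
      = (n.choose i : ℝ) * (f (i + 1) * g (n - i))
        + (n.choose (i + 1) : ℝ) * (f (i + 1) * g (n - i)) := by
    intro i _
    rw [Nat.choose_succ_succ]
    push_cast
    ring
  rw [Finset.sum_congr rfl h4, Finset.sum_add_distrib]
  ring

lemma iteratedDeriv_rpow_mul (p q : ℝ) (n : ℕ) :
    ∀ x ∈ Set.Ioo (0 : ℝ) 1,
      iteratedDeriv n (fun t : ℝ => t ^ p * (1 - t) ^ q) x
        = ∑ lam ∈ range (n + 1), (n.choose lam : ℝ) * (chA q lam x * chB p (n - lam) x) := by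
  induction n with
  | zero =>
    intro x _
    simp [chA, chB, mul_comm]
  | succ n ih =>
    intro x hx
    rw [iteratedDeriv_succ]
    have hev : iteratedDeriv n (fun t : ℝ => t ^ p * (1 - t) ^ q)
        =ᶠ[nhds x] fun y => ∑ lam ∈ range (n + 1),
          (n.choose lam : ℝ) * (chA q lam y * chB p (n - lam) y) := by
      filter_upwards [isOpen_Ioo.mem_nhds hx] with y hy
      exact ih y hy
    rw [hev.deriv_eq]
    have hd : HasDerivAt (fun y => ∑ lam ∈ range (n + 1),
        (n.choose lam : ℝ) * (chA q lam y * chB p (n - lam) y))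
        (∑ lam ∈ range (n + 1), (n.choose lam : ℝ) *
          (chA q (lam + 1) x * chB p (n - lam) x + chA q lam x * chB p (n - lam + 1) x)) x := by
      apply HasDerivAt.fun_sum
      intro lam _
      have := ((hasDerivAt_chA q lam hx.2).mul (hasDerivAt_chB p (n - lam) hx.1)).const_mul
        (n.choose lam : ℝ)
      exact this
    rw [hd.deriv, pascal_sum (fun k => chA q k x) (fun k => chB p k x) n]

/-- Complementary polynomial of the hypergeometric equation:
`𝒫_ν(x,l) = x^(ν+1-c-l) (1-x)^(ν-l+c-a-b) (dᵛ/dtᵛ)(t^(c-1+l)(1-t)^(l+a+b-c)) |_{t=x}`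
(rpow powers). -/
noncomputable def complHypergeom (a b c : ℝ) (l ν : ℕ) (x : ℝ) : ℝ :=
  x ^ ((ν : ℝ) + 1 - c - (l : ℝ)) * (1 - x) ^ ((ν : ℝ) - (l : ℝ) + c - a - b) *
    iteratedDeriv ν
      (fun t : ℝ => t ^ (c - 1 + (l : ℝ)) * (1 - t) ^ ((l : ℝ) + a + b - c)) x

/-- Generalized binomial coefficient `C(r,k) = (∏_{i<k} (r-i)) / k!`. -/
noncomputable def genBinom (r : ℝ) (k : ℕ) : ℝ :=
  (∏ i ∈ Finset.range k, (r - (i : ℝ))) / (Nat.factorial k : ℝ)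

theorem complHypergeom_explicit (a b c : ℝ) (l ν : ℕ) (x : ℝ) (hx0 : 0 < x)
    (hx1 : x < 1) :
    complHypergeom a b c l ν x
      = (Nat.factorial ν : ℝ) *
          ∑ lam ∈ Finset.range (ν + 1),
            genBinom ((l : ℝ) + a + b - c) lam * genBinom ((l : ℝ) + c - 1) (ν - lam)
              * (1 - x) ^ (ν - lam) * (-x) ^ lam := by
  have hx : x ∈ Set.Ioo (0 : ℝ) 1 := ⟨hx0, hx1⟩
  have h1x : (0 : ℝ) < 1 - x := by linarith
  rw [complHypergeom,
    iteratedDeriv_rpow_mul (c - 1 + (l : ℝ)) ((l : ℝ) + a + b - c) ν x hx,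
    Finset.mul_sum, Finset.mul_sum]
  apply Finset.sum_congr rfl
  intro lam hlam
  rw [Finset.mem_range] at hlam
  have hlam' : lam ≤ ν := Nat.lt_succ_iff.mp hlam
  simp only [chA, chB, genBinom]
  have hPp : ∏ i ∈ Finset.range (ν - lam), (c - 1 + (l : ℝ) - i)
      = ∏ i ∈ Finset.range (ν - lam), ((l : ℝ) + c - 1 - i) :=
    Finset.prod_congr rfl (fun i _ => by ring)
  set Pq := ∏ i ∈ Finset.range lam, ((l : ℝ) + a + b - c - i) with hPqdef
  set Pp := ∏ i ∈ Finset.range (ν - lam), ((l : ℝ) + c - 1 - i) with hPpdef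
  rw [hPp]
  have hxa : x ^ ((ν : ℝ) + 1 - c - (l : ℝ))
        * x ^ (c - 1 + (l : ℝ) - ((ν - lam : ℕ) : ℝ)) = x ^ lam := by
    rw [← Real.rpow_natCast x lam, ← Real.rpow_add hx0, Nat.cast_sub hlam']
    congr 1
    ring
  have hxb : (1 - x) ^ ((ν : ℝ) - (l : ℝ) + c - a - b)
        * (1 - x) ^ ((l : ℝ) + a + b - c - (lam : ℝ)) = (1 - x) ^ (ν - lam) := by
    rw [← Real.rpow_natCast (1 - x) (ν - lam), ← Real.rpow_add h1x, Nat.cast_sub hlam']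
    congr 1
    ring
  have hch : (ν.choose lam : ℝ) * ((lam.factorial : ℝ) * ((ν - lam).factorial : ℝ))
      = (ν.factorial : ℝ) := by
    rw [← Nat.cast_mul, ← Nat.cast_mul, ← mul_assoc]
    exact_mod_cast congrArg (Nat.cast : ℕ → ℝ) (Nat.choose_mul_factorial_mul_factorial hlam')
  have hf1 : (lam.factorial : ℝ) ≠ 0 := Nat.cast_ne_zero.mpr lam.factorial_ne_zero
  have hf2 : ((ν - lam).factorial : ℝ) ≠ 0 := Nat.cast_ne_zero.mpr (ν - lam).factorial_ne_zero
  calc x ^ ((ν : ℝ) + 1 - c - (l : ℝ)) * (1 - x) ^ ((ν : ℝ) - (l : ℝ) + c - a - b) *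
        ((ν.choose lam : ℝ) * (Pq * (-1 : ℝ) ^ lam * (1 - x) ^ ((l : ℝ) + a + b - c - (lam : ℝ))
          * (Pp * x ^ (c - 1 + (l : ℝ) - ((ν - lam : ℕ) : ℝ)))))
      = (x ^ ((ν : ℝ) + 1 - c - (l : ℝ)) * x ^ (c - 1 + (l : ℝ) - ((ν - lam : ℕ) : ℝ)))
        * ((1 - x) ^ ((ν : ℝ) - (l : ℝ) + c - a - b)
            * (1 - x) ^ ((l : ℝ) + a + b - c - (lam : ℝ)))
        * ((ν.choose lam : ℝ) * Pq * (-1 : ℝ) ^ lam * Pp) := by ring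
    _ = x ^ lam * (1 - x) ^ (ν - lam) * ((ν.choose lam : ℝ) * Pq * (-1 : ℝ) ^ lam * Pp) := by
        rw [hxa, hxb]
    _ = (ν.factorial : ℝ) * (Pq / (lam.factorial : ℝ) * (Pp / ((ν - lam).factorial : ℝ))
          * (1 - x) ^ (ν - lam) * (-x) ^ lam) := by
        rw [neg_pow]
        field_simp
        linear_combination (x ^ lam * Pq * (-1 : ℝ) ^ lam * Pp) * hch
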